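/- Let n ≥ 2 and k ≥ 1 be integers with k dividing n, set m = n/k, and suppose C ⊆ {1,…,n} contains exactly one element of each consecutive block S_i = {(i−1)·m+1, …, i·m} (i = 1,…,k). Then EMD(C) ≥ (n+k)(n−k) / (4·n·(n−1)·k). -/

import Mathlib

open Finset

private lemma gaussR (N : ℕ) : 2 * ∑ t ∈ Finset.Ioc 0 N, (t : ℝ) = N * (N + 1) := by
  induction N with
  | zero => simp
  | succ N ih =>
    rw [← Finset.Icc_add_one_left_eq_Ioc] at *
    rw [Finset.sum_Icc_succ_top (show 0 + 1 ≤ N + 1 by omega)]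
    push_cast
    ring_nf
    ring_nf at ih
    linarith

private lemma sum_blocks (f : ℕ → ℝ) (k m : ℕ) :
    ∑ i ∈ Finset.Ioc 0 (k * m), f i
      = ∑ b ∈ Finset.range k, ∑ i ∈ Finset.Ioc (b * m) ((b + 1) * m), f i := by
  induction k with
  | zero => simp
  | succ k ih =>
    rw [Finset.sum_range_succ, ← ih,
      Finset.sum_Ioc_consecutive f (Nat.zero_le (k * m))
        (Nat.mul_le_mul_right m (Nat.le_succ k))]

/-- The Earth Mover's Distance (with the ordered distance) between the uniform
distribution on a cluster `C ⊆ {1,…,n}` of `k` records and the uniform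
distribution on the whole data set `{1,…,n}`. -/
noncomputable def EMD (n k : ℕ) (C : Finset ℕ) : ℝ :=
  (1 / ((n : ℝ) - 1)) * ∑ i ∈ Finset.Icc 1 n,
    |∑ j ∈ Finset.Icc 1 i, ((if j ∈ C then (1 : ℝ) / k else 0) - 1 / n)|

/-- If `k ∣ n`, `m = n/k`, and `C ⊆ {1,…,n}` contains exactly one element of
each consecutive block `S_i = {(i−1)m+1, …, im}`, then
`EMD(C) ≥ (n+k)(n−k)/(4n(n−1)k)`. -/
theorem emd_one_per_block_lower_bound (n k m : ℕ) (hn : 2 ≤ n) (hk : 1 ≤ k)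
    (hdvd : k ∣ n) (hm : m = n / k)
    (C : Finset ℕ) (hC : C ⊆ Finset.Icc 1 n)
    (hone : ∀ i ∈ Finset.Icc 1 k,
      (C ∩ Finset.Icc ((i - 1) * m + 1) (i * m)).card = 1)
    (hcard : C.card = k) :
    ((n : ℝ) + k) * ((n : ℝ) - k) / (4 * n * ((n : ℝ) - 1) * k) ≤ EMD n k C := by
  have hkn : k ≤ n := Nat.le_of_dvd (by omega) hdvd
  have hnkm : n = k * m := by
    rw [hm, Nat.mul_div_cancel' hdvd]
  have hm1 : 1 ≤ m := Nat.one_le_iff_ne_zero.2 (by rintro rfl; simp at hnkm; omega)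
  -- blocks
  have hblk : ∀ b < k, (C ∩ Finset.Ioc (b * m) ((b + 1) * m)).card = 1 := by
    intro b hb
    have := hone (b + 1) (by simp [Nat.succ_le_of_lt hb])
    simpa [Finset.Icc_add_one_left_eq_Ioc] using this
  -- counting up to block boundaries
  have hcount : ∀ b ≤ k, (C ∩ Finset.Ioc 0 (b * m)).card = b := by
    intro b hb
    induction b with
    | zero => simp
    | succ b ih =>
      have hb' : b ≤ k := Nat.le_of_succ_le hb
      have hsplit : Finset.Ioc 0 ((b + 1) * m) =
          Finset.Ioc 0 (b * m) ∪ Finset.Ioc (b * m) ((b + 1) * m) :=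
        (Finset.Ioc_union_Ioc_eq_Ioc (Nat.zero_le _)
          (Nat.mul_le_mul_right m (Nat.le_succ b))).symm
      have hdisj : Disjoint (C ∩ Finset.Ioc 0 (b * m))
          (C ∩ Finset.Ioc (b * m) ((b + 1) * m)) := by
        apply Finset.disjoint_left.2
        intro a ha ha'
        simp only [Finset.mem_inter, Finset.mem_Ioc] at ha ha'
        omega
      rw [hsplit, Finset.inter_union_distrib_left,
        Finset.card_union_of_disjoint hdisj, ih hb', hblk b hb]
  -- rewrite EMD
  have hn1 : (0:ℝ) < (n:ℝ) - 1 := by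
    have : (2:ℝ) ≤ n := by exact_mod_cast hn
    linarith
  have hnR : (0:ℝ) < n := by positivity
  have hkR : (0:ℝ) < k := by exact_mod_cast hk
  have hmR : (1:ℝ) ≤ m := by exact_mod_cast hm1
  have hnkmR : (n:ℝ) = k * m := by exact_mod_cast hnkm
  -- inner sum formula
  have hF : ∀ i : ℕ, ∑ j ∈ Finset.Icc 1 i, ((if j ∈ C then (1 : ℝ) / k else 0) - 1 / n)
      = ((C ∩ Finset.Icc 1 i).card : ℝ) / k - i / n := by
    intro i
    rw [Finset.sum_sub_distrib, Finset.sum_ite_mem, Finset.inter_comm, Finset.sum_const,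
      Finset.sum_const, Nat.card_Icc]
    simp
    ring
  -- per block lower bound
  have hblock : ∀ b < k,
      ((m:ℝ)^2 - 1) / (4 * n) ≤
        ∑ i ∈ Finset.Ioc (b * m) ((b + 1) * m),
          |((C ∩ Finset.Icc 1 i).card : ℝ) / k - i / n| := by
    intro b hb
    obtain ⟨p, hp⟩ := Finset.card_eq_one.1 (hblk b hb)
    have hpmem : p ∈ C ∩ Finset.Ioc (b * m) ((b + 1) * m) := hp ▸ Finset.mem_singleton_self p
    rw [Finset.mem_inter, Finset.mem_Ioc] at hpmem
    obtain ⟨hpC, hp1, hp2⟩ := hpmem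
    have hbm : (b + 1) * m = b * m + m := by ring
    rw [hbm] at hp2 ⊢
    obtain ⟨s, hps, hs1, hsm⟩ : ∃ s, p = b * m + s ∧ 1 ≤ s ∧ s ≤ m :=
      ⟨p - b * m, by omega, by omega, by omega⟩
    -- card formula on the block
    have hcard' : ∀ i ∈ Finset.Ioc (b * m) (b * m + m),
        (C ∩ Finset.Icc 1 i).card = b + (if p ≤ i then 1 else 0) := by
      intro i hi
      rw [Finset.mem_Ioc] at hi
      have h01 : Finset.Icc 1 i = Finset.Ioc 0 i := Finset.Icc_add_one_left_eq_Ioc 0 i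
      have hsplit : Finset.Ioc 0 i = Finset.Ioc 0 (b * m) ∪ Finset.Ioc (b * m) i :=
        (Finset.Ioc_union_Ioc_eq_Ioc (Nat.zero_le _) (Nat.le_of_lt hi.1)).symm
      have hdisj : Disjoint (C ∩ Finset.Ioc 0 (b * m)) (C ∩ Finset.Ioc (b * m) i) := by
        apply Finset.disjoint_left.2
        intro a ha ha'
        simp only [Finset.mem_inter, Finset.mem_Ioc] at ha ha'
        omega
      have hsub : Finset.Ioc (b * m) ((b + 1) * m) ∩ Finset.Ioc (b * m) i
          = Finset.Ioc (b * m) i :=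
        Finset.inter_eq_right.2 (Finset.Ioc_subset_Ioc_right (by omega))
      have htail : C ∩ Finset.Ioc (b * m) i = {p} ∩ Finset.Ioc (b * m) i := by
        conv_lhs => rw [← hsub, ← Finset.inter_assoc, hp]
      have htc : (C ∩ Finset.Ioc (b * m) i).card = if p ≤ i then 1 else 0 := by
        rw [htail]
        by_cases hpi : p ≤ i
        · rw [if_pos hpi, Finset.inter_eq_left.2]
          · simp
          · simp only [Finset.singleton_subset_iff, Finset.mem_Ioc]
            exact ⟨hp1, hpi⟩
        · rw [if_neg hpi, Finset.card_eq_zero, Finset.eq_empty_iff_forall_notMem]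
          intro a ha
          simp only [Finset.mem_inter, Finset.mem_singleton, Finset.mem_Ioc] at ha
          omega
      rw [h01, hsplit, Finset.inter_union_distrib_left,
        Finset.card_union_of_disjoint hdisj, hcount b (Nat.le_of_lt hb), htc]
    -- absolute value formula
    have hk0 : (k:ℝ) ≠ 0 := ne_of_gt hkR
    have hn0 : (n:ℝ) ≠ 0 := ne_of_gt hnR
    have hm0 : (m:ℝ) ≠ 0 := by positivity
    have habs : ∀ i ∈ Finset.Ioc (b * m) (b * m + m),
        |((C ∩ Finset.Icc 1 i).card : ℝ) / k - i / n|
          = (if i < p then ((i : ℝ) - b * m) else ((b * m + m : ℕ) : ℝ) - i) / n := by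
      intro i hi
      have hi' := Finset.mem_Ioc.1 hi
      rw [hcard' i hi]
      by_cases hpi : p ≤ i
      · rw [if_pos hpi, if_neg (show ¬ i < p by omega)]
        push_cast
        have key : ((b:ℝ) + 1) / k - (i:ℝ) / n = ((b:ℝ) * m + m - i) / n := by
          rw [hnkmR]; field_simp
        rw [key, abs_of_nonneg]
        apply div_nonneg _ (le_of_lt hnR)
        have h2 : (i:ℝ) ≤ (b:ℝ) * m + m := by exact_mod_cast hi'.2
        linarith
      · rw [if_neg hpi, if_pos (show i < p by omega)]
        push_cast [add_zero]
        have key : (b:ℝ) / k - (i:ℝ) / n = -(((i : ℝ) - b * m) / n) := by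
          rw [hnkmR]; field_simp; ring
        rw [key, abs_neg, abs_of_nonneg]
        apply div_nonneg _ (le_of_lt hnR)
        have h1 : ((b:ℝ) * m) + 1 ≤ (i:ℝ) := by exact_mod_cast hi'.1
        linarith
    rw [Finset.sum_congr rfl habs]
    -- split the block at p - 1 = b*m + (s-1)
    have hq : p - 1 = b * m + (s - 1) := by omega
    have hsplit2 := Finset.sum_Ioc_consecutive
      (fun i => (if i < p then ((i : ℝ) - b * m) else ((b * m + m : ℕ) : ℝ) - i) / n)
      (show b * m ≤ b * m + (s - 1) by omega)
      (show b * m + (s - 1) ≤ b * m + m by omega)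
    rw [← hsplit2]
    -- first part
    have e1 : Finset.Ioc (b * m) (b * m + (s - 1))
        = (Finset.Ioc 0 (s - 1)).map (addLeftEmbedding (b * m)) := by
      rw [Finset.map_add_left_Ioc]; simp
    have e2 : Finset.Ioc (b * m + (s - 1)) (b * m + m)
        = (Finset.Ioc (s - 1) m).map (addLeftEmbedding (b * m)) := by
      rw [Finset.map_add_left_Ioc]
    rw [e1, e2, Finset.sum_map, Finset.sum_map]
    simp only [addLeftEmbedding_apply]
    have f1 : ∀ t ∈ Finset.Ioc 0 (s - 1),
        (if b * m + t < p then ((b * m + t : ℕ) : ℝ) - b * m else ((b * m + m : ℕ) : ℝ) - (b * m + t : ℕ)) / n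
          = (t : ℝ) / n := by
      intro t ht
      rw [Finset.mem_Ioc] at ht
      rw [if_pos (by omega)]
      push_cast
      ring_nf
    have f2 : ∀ t ∈ Finset.Ioc (s - 1) m,
        (if b * m + t < p then ((b * m + t : ℕ) : ℝ) - b * m else ((b * m + m : ℕ) : ℝ) - (b * m + t : ℕ)) / n
          = ((m : ℝ) - t) / n := by
      intro t ht
      rw [Finset.mem_Ioc] at ht
      rw [if_neg (by omega)]
      push_cast
      ring_nf
    rw [Finset.sum_congr rfl f1, Finset.sum_congr rfl f2]
    -- evaluate
    have g1 := gaussR (s - 1)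
    have g2 := gaussR m
    have gsplit := Finset.sum_Ioc_consecutive (fun t => (t : ℝ))
      (Nat.zero_le (s - 1)) (show s - 1 ≤ m by omega)
    rw [← Finset.sum_div, ← Finset.sum_div, ← add_div]
    rw [show ((m:ℝ)^2 - 1) / (4 * (n:ℝ)) = (((m:ℝ)^2 - 1)/4) / n by ring]
    rw [div_le_div_iff_of_pos_right hnR]
    rw [Finset.sum_sub_distrib, Finset.sum_const, Nat.card_Ioc, nsmul_eq_mul]
    have c1 : ((s - 1 : ℕ) : ℝ) = (s : ℝ) - 1 := by
      push_cast [Nat.cast_sub hs1]; ring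
    have c2 : ((m - (s - 1) : ℕ) : ℝ) = (m : ℝ) - (s : ℝ) + 1 := by
      have : m - (s - 1) = m - s + 1 := by omega
      rw [this]
      push_cast [Nat.cast_sub hsm]; ring
    rw [c1] at g1
    rw [c2]
    have hsR : (1:ℝ) ≤ (s:ℝ) := by exact_mod_cast hs1
    nlinarith [sq_nonneg (2 * (s:ℝ) - (m:ℝ) - 1), g1, g2, gsplit]
  -- assemble
  unfold EMD
  have hrw : ∑ i ∈ Finset.Icc 1 n,
      |∑ j ∈ Finset.Icc 1 i, ((if j ∈ C then (1 : ℝ) / k else 0) - 1 / n)|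
      = ∑ b ∈ Finset.range k, ∑ i ∈ Finset.Ioc (b * m) ((b + 1) * m),
          |((C ∩ Finset.Icc 1 i).card : ℝ) / k - i / n| := by
    calc ∑ i ∈ Finset.Icc 1 n,
        |∑ j ∈ Finset.Icc 1 i, ((if j ∈ C then (1 : ℝ) / k else 0) - 1 / n)|
        = ∑ i ∈ Finset.Ioc 0 n, |((C ∩ Finset.Icc 1 i).card : ℝ) / k - i / n| := by
          rw [show Finset.Icc 1 n = Finset.Ioc 0 n from Finset.Icc_add_one_left_eq_Ioc 0 n]
          exact Finset.sum_congr rfl (fun i _ => by rw [hF i])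
      _ = _ := by
          rw [show Finset.Ioc 0 n = Finset.Ioc 0 (k * m) from by rw [← hnkm], sum_blocks]
  rw [hrw]
  have htot : (k : ℝ) * (((m:ℝ)^2 - 1) / (4 * n)) ≤
      ∑ b ∈ Finset.range k, ∑ i ∈ Finset.Ioc (b * m) ((b + 1) * m),
        |((C ∩ Finset.Icc 1 i).card : ℝ) / k - i / n| := by
    calc (k : ℝ) * (((m:ℝ)^2 - 1) / (4 * n))
        = ∑ _b ∈ Finset.range k, (((m:ℝ)^2 - 1) / (4 * n)) := by
          rw [Finset.sum_const, Finset.card_range, nsmul_eq_mul]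
      _ ≤ _ := Finset.sum_le_sum (fun b hb => hblock b (Finset.mem_range.1 hb))
  have hk0 : (k:ℝ) ≠ 0 := ne_of_gt hkR
  have hm0 : (m:ℝ) ≠ 0 := by positivity
  have hn10 : (k:ℝ) * m - 1 ≠ 0 := by rw [← hnkmR]; exact ne_of_gt hn1
  have heq : ((n : ℝ) + k) * ((n : ℝ) - k) / (4 * n * ((n : ℝ) - 1) * k)
      = (1 / ((n : ℝ) - 1)) * ((k : ℝ) * (((m:ℝ)^2 - 1) / (4 * n))) := by
    rw [hnkmR]
    field_simp
    ring
  rw [heq]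
  apply mul_le_mul_of_nonneg_left htot
  positivity
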